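/- Let γ_{k,r} = lim_{n→∞} EL_{n,k,r}/n and γ_k = lim_{n→∞} EL_n^{(k)}/n, where EL_{n,k,r} is the expected r-reach LCS length of two uniformly random strings of length n over a k-letter alphabet. Then γ_{k,r} ≤ γ_k for all r, γ_{k,r} ≥ EL_r^{(k)}/r, and consequently lim_{r→∞} γ_{k,r} = γ_k. -/

import Mathlib

open Filter Finset

/-- `m` is the length of a common subsequence of `u` and `v`. -/
def IsCommonSubseqLen {k n : ℕ} (u v : Fin n → Fin k) (m : ℕ) : Prop :=
  ∃ i j : Fin m → Fin n, StrictMono i ∧ StrictMono j ∧ ∀ t, u (i t) = v (j t)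

/-- `m` is the length of an `r`-reach common subsequence of `u` and `v`. -/
def IsRReachCommonSubseqLen {k n : ℕ} (r : ℕ) (u v : Fin n → Fin k) (m : ℕ) : Prop :=
  ∃ i j : Fin m → Fin n, StrictMono i ∧ StrictMono j ∧
    ∀ t, u (i t) = v (j t) ∧ ((i t : ℤ) - (j t : ℤ)).natAbs ≤ r

/-- Length of a longest common subsequence. -/
noncomputable def lcsLen {k n : ℕ} (u v : Fin n → Fin k) : ℕ :=
  sSup {m | IsCommonSubseqLen u v m}

/-- Length of a longest `r`-reach common subsequence. -/
noncomputable def lcsLenR {k n : ℕ} (r : ℕ) (u v : Fin n → Fin k) : ℕ :=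
  sSup {m | IsRReachCommonSubseqLen r u v m}

/-- Expected LCS length of two uniformly random strings of length `n` over a
`k`-letter alphabet. -/
noncomputable def EL (k n : ℕ) : ℝ :=
  (1 / (k : ℝ) ^ (2 * n)) *
    ∑ u : Fin n → Fin k, ∑ v : Fin n → Fin k, (lcsLen u v : ℝ)

/-- Expected `r`-reach LCS length. -/
noncomputable def ELR (k r n : ℕ) : ℝ :=
  (1 / (k : ℝ) ^ (2 * n)) *
    ∑ u : Fin n → Fin k, ∑ v : Fin n → Fin k, (lcsLenR r u v : ℝ)

lemma zero_mem_R {k n r : ℕ} (u v : Fin n → Fin k) :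
    (0 : ℕ) ∈ {m | IsRReachCommonSubseqLen r u v m} :=
  ⟨Fin.elim0, Fin.elim0, fun a => a.elim0, fun a => a.elim0, fun t => t.elim0⟩

lemma bddAbove_R {k n r : ℕ} (u v : Fin n → Fin k) :
    BddAbove {m | IsRReachCommonSubseqLen r u v m} := by
  refine ⟨n, fun m hm => ?_⟩
  obtain ⟨i, _, hi, _, _⟩ := hm
  simpa using Fintype.card_le_of_injective i hi.injective

lemma bddAbove_plain {k n : ℕ} (u v : Fin n → Fin k) :
    BddAbove {m | IsCommonSubseqLen u v m} := by
  refine ⟨n, fun m hm => ?_⟩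
  obtain ⟨i, _, hi, _, _⟩ := hm
  simpa using Fintype.card_le_of_injective i hi.injective

lemma lcsLenR_le_lcsLen {k n r : ℕ} (u v : Fin n → Fin k) :
    lcsLenR r u v ≤ lcsLen u v := by
  refine csSup_le_csSup (bddAbove_plain u v) ⟨0, zero_mem_R u v⟩ ?_
  rintro m ⟨i, j, hi, hj, h⟩
  exact ⟨i, j, hi, hj, fun t => (h t).1⟩

lemma lcsLenR_eq_lcsLen {k r : ℕ} (u v : Fin r → Fin k) :
    lcsLenR r u v = lcsLen u v := by
  unfold lcsLenR lcsLen
  congr 1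
  ext m
  constructor
  · rintro ⟨i, j, hi, hj, h⟩
    exact ⟨i, j, hi, hj, fun t => (h t).1⟩
  · rintro ⟨i, j, hi, hj, h⟩
    refine ⟨i, j, hi, hj, fun t => ⟨h t, ?_⟩⟩
    have h1 := (i t).isLt
    have h2 := (j t).isLt
    omega

lemma strictMono_append {m1 m2 a b : ℕ} (f : Fin m1 → Fin (a + b)) (g : Fin m2 → Fin (a + b))
    (hf : StrictMono f) (hg : StrictMono g) (hfg : ∀ s t, f s < g t) :
    StrictMono (Fin.append f g) := by
  intro x y hxy
  induction x using Fin.addCases with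
  | left x =>
    induction y using Fin.addCases with
    | left y =>
      rw [Fin.append_left, Fin.append_left]
      refine hf ?_
      simp only [Fin.lt_def, Fin.coe_castAdd] at hxy ⊢
      exact hxy
    | right y =>
      rw [Fin.append_left, Fin.append_right]
      exact hfg x y
  | right x =>
    induction y using Fin.addCases with
    | left y =>
      exfalso
      have hy := y.isLt
      simp only [Fin.lt_def, Fin.coe_castAdd, Fin.coe_natAdd] at hxy
      omega
    | right y =>
      rw [Fin.append_right, Fin.append_right]
      refine hg ?_
      simp only [Fin.lt_def, Fin.coe_natAdd] at hxy ⊢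
      omega

lemma lcsLenR_superadd {k a b r : ℕ} (u v : Fin (a + b) → Fin k) :
    lcsLenR r (u ∘ Fin.castAdd b) (v ∘ Fin.castAdd b) +
      lcsLenR r (u ∘ Fin.natAdd a) (v ∘ Fin.natAdd a) ≤ lcsLenR r u v := by
  have h1 := Nat.sSup_mem ⟨0, zero_mem_R (r:=r) (u ∘ Fin.castAdd b) (v ∘ Fin.castAdd b)⟩
    (bddAbove_R (r:=r) (u ∘ Fin.castAdd b) (v ∘ Fin.castAdd b))
  have h2 := Nat.sSup_mem ⟨0, zero_mem_R (r:=r) (u ∘ Fin.natAdd a) (v ∘ Fin.natAdd a)⟩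
    (bddAbove_R (r:=r) (u ∘ Fin.natAdd a) (v ∘ Fin.natAdd a))
  obtain ⟨i1, j1, hi1, hj1, h1⟩ := h1
  obtain ⟨i2, j2, hi2, hj2, h2⟩ := h2
  refine le_csSup (bddAbove_R u v) ?_
  refine ⟨Fin.append (fun t => Fin.castAdd b (i1 t)) (fun t => Fin.natAdd a (i2 t)),
    Fin.append (fun t => Fin.castAdd b (j1 t)) (fun t => Fin.natAdd a (j2 t)), ?_, ?_, ?_⟩
  · refine strictMono_append _ _ (fun x y h => ?_) (fun x y h => ?_) (fun s t => ?_)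
    · have := hi1 h
      simp only [Fin.lt_def, Fin.coe_castAdd] at this ⊢; exact this
    · have := hi2 h
      simp only [Fin.lt_def, Fin.coe_natAdd] at this ⊢; omega
    · simp only [Fin.lt_def, Fin.coe_castAdd, Fin.coe_natAdd]
      have := (i1 s).isLt
      omega
  · refine strictMono_append _ _ (fun x y h => ?_) (fun x y h => ?_) (fun s t => ?_)
    · have := hj1 h
      simp only [Fin.lt_def, Fin.coe_castAdd] at this ⊢; exact this
    · have := hj2 h
      simp only [Fin.lt_def, Fin.coe_natAdd] at this ⊢; omega
    · simp only [Fin.lt_def, Fin.coe_castAdd, Fin.coe_natAdd]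
      have := (j1 s).isLt
      omega
  · intro t
    induction t using Fin.addCases with
    | left t =>
      rw [Fin.append_left, Fin.append_left]
      refine ⟨(h1 t).1, ?_⟩
      have := (h1 t).2
      simp only [Fin.coe_castAdd] at *
      omega
    | right t =>
      rw [Fin.append_right, Fin.append_right]
      refine ⟨(h2 t).1, ?_⟩
      have := (h2 t).2
      simp only [Fin.coe_natAdd] at *
      omega

noncomputable def glueEquiv (k a b : ℕ) :
    (Fin a → Fin k) × (Fin b → Fin k) ≃ (Fin (a + b) → Fin k) :=
  (Equiv.sumArrowEquivProdArrow (Fin a) (Fin b) (Fin k)).symm.trans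
    (Equiv.arrowCongr finSumFinEquiv (Equiv.refl (Fin k)))

lemma glueEquiv_castAdd {k a b : ℕ} (p : (Fin a → Fin k) × (Fin b → Fin k)) :
    (glueEquiv k a b p) ∘ Fin.castAdd b = p.1 := by
  funext x
  simp [glueEquiv, Equiv.arrowCongr, Equiv.sumArrowEquivProdArrow,
    finSumFinEquiv_symm_apply_castAdd]

lemma glueEquiv_natAdd {k a b : ℕ} (p : (Fin a → Fin k) × (Fin b → Fin k)) :
    (glueEquiv k a b p) ∘ Fin.natAdd a = p.2 := by
  funext x
  simp [glueEquiv, Equiv.arrowCongr, Equiv.sumArrowEquivProdArrow,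
    finSumFinEquiv_symm_apply_natAdd]

lemma ELR_nonneg (k r n : ℕ) : 0 ≤ ELR k r n := by
  unfold ELR
  apply mul_nonneg
  · positivity
  · apply Finset.sum_nonneg; intro u _
    apply Finset.sum_nonneg; intro v _
    positivity

lemma ELR_superadd (k r a b : ℕ) (hk : 1 ≤ k) :
    ELR k r a + ELR k r b ≤ ELR k r (a + b) := by
  have hkp : (0 : ℝ) < (k : ℝ) := by exact_mod_cast hk
  set SA := ∑ u : Fin a → Fin k, ∑ v : Fin a → Fin k, (lcsLenR r u v : ℝ) with hSA
  set SB := ∑ u : Fin b → Fin k, ∑ v : Fin b → Fin k, (lcsLenR r u v : ℝ) with hSB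
  have hS : (k : ℝ) ^ (2 * b) * SA + (k : ℝ) ^ (2 * a) * SB ≤
      ∑ u : Fin (a + b) → Fin k, ∑ v : Fin (a + b) → Fin k, (lcsLenR r u v : ℝ) := by
    have e1 : ∑ u : Fin (a + b) → Fin k, ∑ v : Fin (a + b) → Fin k, (lcsLenR r u v : ℝ)
        = ∑ p : (Fin a → Fin k) × (Fin b → Fin k), ∑ q : (Fin a → Fin k) × (Fin b → Fin k),
            (lcsLenR r (glueEquiv k a b p) (glueEquiv k a b q) : ℝ) := by
      rw [← Equiv.sum_comp (glueEquiv k a b)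
        (fun u => ∑ v : Fin (a + b) → Fin k, (lcsLenR r u v : ℝ))]
      refine Finset.sum_congr rfl fun p _ => ?_
      rw [← Equiv.sum_comp (glueEquiv k a b)
        (fun v => (lcsLenR r (glueEquiv k a b p) v : ℝ))]
    rw [e1]
    have e2 : ∀ p q : (Fin a → Fin k) × (Fin b → Fin k),
        (lcsLenR r p.1 q.1 : ℝ) + (lcsLenR r p.2 q.2 : ℝ) ≤
          (lcsLenR r (glueEquiv k a b p) (glueEquiv k a b q) : ℝ) := by
      intro p q
      have := lcsLenR_superadd (r := r) (glueEquiv k a b p) (glueEquiv k a b q)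
      rw [glueEquiv_castAdd, glueEquiv_natAdd, glueEquiv_castAdd, glueEquiv_natAdd] at this
      exact_mod_cast this
    calc (k : ℝ) ^ (2 * b) * SA + (k : ℝ) ^ (2 * a) * SB
        = ∑ p : (Fin a → Fin k) × (Fin b → Fin k), ∑ q : (Fin a → Fin k) × (Fin b → Fin k),
            ((lcsLenR r p.1 q.1 : ℝ) + (lcsLenR r p.2 q.2 : ℝ)) := by
          simp only [Fintype.sum_prod_type, Finset.sum_add_distrib]
          rw [hSA, hSB]
          congr 1
          · simp only [Finset.sum_const, Finset.card_univ, Fintype.card_fun, Fintype.card_fin,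
              nsmul_eq_mul, ← Finset.mul_sum]
            push_cast
            ring
          · simp only [Finset.sum_const, Finset.card_univ, Fintype.card_fun, Fintype.card_fin,
              nsmul_eq_mul, ← Finset.mul_sum]
            push_cast
            ring
      _ ≤ _ := by
          refine Finset.sum_le_sum fun p _ => Finset.sum_le_sum fun q _ => e2 p q
  unfold ELR
  rw [← hSA, ← hSB]
  have hfactor : (0 : ℝ) ≤ 1 / (k : ℝ) ^ (2 * (a + b)) := by positivity
  calc 1 / (k : ℝ) ^ (2 * a) * SA + 1 / (k : ℝ) ^ (2 * b) * SB
      = (1 / (k : ℝ) ^ (2 * (a + b))) * ((k : ℝ) ^ (2 * b) * SA + (k : ℝ) ^ (2 * a) * SB) := by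
        field_simp
        ring
    _ ≤ _ := mul_le_mul_of_nonneg_left hS hfactor

open Filter

lemma ELR_at_r (k r : ℕ) : ELR k r r = EL k r := by
  unfold ELR EL
  simp only [lcsLenR_eq_lcsLen]

lemma mul_EL_le_ELR (k r : ℕ) (hk : 1 ≤ k) : ∀ m : ℕ, (m : ℝ) * EL k r ≤ ELR k r (m * r) := by
  intro m
  induction m with
  | zero => simpa using ELR_nonneg k r 0
  | succ m ih =>
    have h1 : ELR k r (m * r) + ELR k r r ≤ ELR k r (m * r + r) := ELR_superadd k r _ _ hk
    have h2 : (m + 1) * r = m * r + r := by ring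
    rw [h2]
    push_cast
    calc ((m : ℝ) + 1) * EL k r = (m : ℝ) * EL k r + EL k r := by ring
      _ ≤ ELR k r (m * r) + ELR k r r := by rw [ELR_at_r]; exact add_le_add ih le_rfl
      _ ≤ _ := h1

lemma ELR_le_EL (k r n : ℕ) : ELR k r n ≤ EL k n := by
  unfold ELR EL
  apply mul_le_mul_of_nonneg_left _ (by positivity)
  refine Finset.sum_le_sum fun u _ => Finset.sum_le_sum fun v _ => ?_
  exact_mod_cast lcsLenR_le_lcsLen u v


theorem gamma_r_le_gamma_and_tendsto (k : ℕ) (hk : 1 ≤ k)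
    (γk : ℝ) (γkr : ℕ → ℝ)
    (hγk : Tendsto (fun n => EL k n / n) atTop (nhds γk))
    (hγkr : ∀ r, Tendsto (fun n => ELR k r n / n) atTop (nhds (γkr r))) :
    (∀ r, γkr r ≤ γk) ∧
    (∀ r, 1 ≤ r → EL k r / r ≤ γkr r) ∧
    Tendsto γkr atTop (nhds γk) := by
  have part1 : ∀ r, γkr r ≤ γk := by
    intro r
    refine le_of_tendsto_of_tendsto' (hγkr r) hγk fun n => ?_
    rcases Nat.eq_zero_or_pos n with hn | hn
    · simp [hn]
    · have hn' : (0 : ℝ) < n := by exact_mod_cast hn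
      exact div_le_div_of_nonneg_right (ELR_le_EL k r n) hn'.le |>.trans_eq rfl
  have part2 : ∀ r, 1 ≤ r → EL k r / r ≤ γkr r := by
    intro r hr
    have hcomp : Tendsto (fun m : ℕ => ELR k r (m * r) / ((m * r : ℕ) : ℝ)) atTop
        (nhds (γkr r)) := by
      refine (hγkr r).comp ?_
      refine tendsto_atTop_mono (fun m => ?_) tendsto_id
      calc m = m * 1 := (mul_one m).symm
        _ ≤ m * r := Nat.mul_le_mul_left m hr
    refine ge_of_tendsto hcomp ?_
    filter_upwards [eventually_ge_atTop 1] with m hm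
    have hm' : (0 : ℝ) < m := by exact_mod_cast hm
    have hr' : (0 : ℝ) < r := by exact_mod_cast hr
    have key := mul_EL_le_ELR k r hk m
    have e : EL k r / r = ((m : ℝ) * EL k r) / ((m : ℝ) * r) :=
      (mul_div_mul_left _ _ hm'.ne').symm
    rw [e]
    push_cast
    exact div_le_div_of_nonneg_right key (by positivity) |>.trans_eq rfl
  refine ⟨part1, part2, ?_⟩
  refine tendsto_of_tendsto_of_tendsto_of_le_of_le' hγk tendsto_const_nhds ?_ ?_
  · filter_upwards [eventually_ge_atTop 1] with r hr
    exact part2 r hr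
  · filter_upwards with r
    exact part1 r
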